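/- Let F and G be the cumulative distribution functions of two probability measures on the real line, each supported on the finite interval [-B,B], and let G_F and G_G denote their Cauchy transforms. Let A > B, let γ > 1/2 and c > 0 be related by γ = (1/π)∫_{|u|<c} du/(1+u²), and suppose κ := 4B/(π(A−B)(2γ−1)) < 1. Then for every v > 0, sup_{x∈ℝ} |F(x) − G(x)| ≤ (1/(π(1−κ)(2γ−1))) · [ ∫_{−A}^{A} |G_F(u+iv) − G_G(u+iv)| du + (1/v) sup_{x∈ℝ} ∫_{|y|≤2vc} |G(x+y) − G(x)| dy ]. -/

import Mathlib

open MeasureTheory Complex Set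

/-- The Cauchy transform of a measure on ℝ: `G_μ(z) = ∫ dμ(t)/(z−t)`. -/
noncomputable def cauchyT (μ : Measure ℝ) (z : ℂ) : ℂ := ∫ t : ℝ, (z - (t : ℂ))⁻¹ ∂μ

/-- The cumulative distribution function of a measure on ℝ. -/
noncomputable def cdfOf (μ : Measure ℝ) (x : ℝ) : ℝ := (μ (Set.Iic x)).toReal

/-- The cumulative distribution function of the standard semicircle law. -/
noncomputable def semicircleCDF (x : ℝ) : ℝ :=
  (1 / Real.pi) * ∫ t in Set.Iic x,
    Set.indicator (Set.Icc (-2 : ℝ) 2) (fun s => Real.sqrt (4 - s ^ 2)) t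

/-- The branch of `√(z²−4)` holomorphic on the upper half-plane with `√(z²−4) ∼ z`
as `z → ∞`, given by `√(z−2)·√(z+2)` with principal square roots. -/
noncomputable def sqrtBr (z : ℂ) : ℂ := (z - 2) ^ ((1 : ℂ) / 2) * (z + 2) ^ ((1 : ℂ) / 2)

/-- The Cauchy transform of the semicircle law: `G_Φ(z) = (z − √(z²−4))/2`. -/
noncomputable def Gsc (z : ℂ) : ℂ := (z - sqrtBr z) / 2

namespace BaiAux

open Real Filter

noncomputable def pker (v y : ℝ) : ℝ := v / (Real.pi * (y ^ 2 + v ^ 2))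

variable {v : ℝ}

lemma pker_nonneg (hv : 0 < v) (y : ℝ) : 0 ≤ pker v y := by
  have h : 0 < Real.pi * (y ^ 2 + v ^ 2) := by positivity
  exact div_nonneg hv.le h.le

lemma pker_cont (hv : 0 < v) : Continuous (pker v) := by
  apply continuous_const.div (by continuity)
  intro y
  positivity

lemma pker_meas (hv : 0 < v) : Measurable (pker v) := (pker_cont hv).measurable

lemma pker_le (hv : 0 < v) (y : ℝ) : pker v y ≤ 1 / (Real.pi * v) := by
  rw [pker, div_le_div_iff₀ (by positivity) (by positivity)]
  nlinarith [sq_nonneg y, Real.pi_pos]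

lemma pker_le_abs (hv : 0 < v) {a y : ℝ} (ha : 0 < a) (hy : a ≤ |y|) :
    pker v y ≤ 1 / (2 * Real.pi * a) := by
  have h1 : a ^ 2 ≤ y ^ 2 := by nlinarith [abs_nonneg y, _root_.sq_abs y]
  rw [pker, div_le_div_iff₀ (by positivity) (by positivity)]
  nlinarith [sq_nonneg (a - v), Real.pi_pos]

lemma pker_eq (hv : 0 < v) (y : ℝ) :
    pker v y = 1 / (Real.pi * v) * (1 + (y / v) ^ 2)⁻¹ := by
  rw [pker]
  field_simp
  ring

lemma pker_integrable (hv : 0 < v) : Integrable (pker v) := by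
  refine (integrable_inv_one_add_sq.const_mul ((v + v⁻¹) / Real.pi)).mono'
    (pker_cont hv).aestronglyMeasurable ?_
  filter_upwards with y
  rw [Real.norm_eq_abs, _root_.abs_of_nonneg (pker_nonneg hv y), pker]
  have hR : (v + v⁻¹) / Real.pi * (1 + y ^ 2)⁻¹ = (v + v⁻¹) / (Real.pi * (1 + y ^ 2)) := by
    field_simp
  rw [hR, div_le_div_iff₀ (by positivity) (by positivity)]
  have hv' : v * v⁻¹ = 1 := mul_inv_cancel₀ hv.ne'
  have key : v * (1 + y ^ 2) ≤ (v + v⁻¹) * (y ^ 2 + v ^ 2) := by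
    have h2 : (v + v⁻¹) * (y ^ 2 + v ^ 2) = v * y ^ 2 + v ^ 2 * v + v⁻¹ * y ^ 2 + v := by
      have : v⁻¹ * v ^ 2 = v := by
        field_simp
      nlinarith [this]
    have h3 : 0 ≤ v⁻¹ * y ^ 2 := by positivity
    nlinarith [mul_pos (mul_pos hv hv) hv]
  nlinarith [Real.pi_pos, key]

lemma pker_hasDeriv (hv : 0 < v) (x : ℝ) :
    HasDerivAt (fun y => (1 : ℝ) / 2 + Real.arctan (y / v) / Real.pi) (pker v x) x := by
  have h1 : HasDerivAt (fun y : ℝ => y / v) (1 / v) x := by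
    simpa using (hasDerivAt_id x).div_const v
  have h2 := (Real.hasDerivAt_arctan (x / v)).comp x h1
  have h3 := (h2.div_const Real.pi).const_add ((1 : ℝ) / 2)
  refine h3.congr_deriv ?_
  rw [pker]
  field_simp
  ring

lemma pker_integral_Iic (hv : 0 < v) (a : ℝ) :
    ∫ y in Iic a, pker v y = 1 / 2 + Real.arctan (a / v) / Real.pi := by
  have htend : Tendsto (fun y => (1 : ℝ) / 2 + Real.arctan (y / v) / Real.pi) atBot (nhds 0) := by
    have t1 : Tendsto (fun y : ℝ => y / v) atBot atBot :=
      Tendsto.atBot_div_const hv tendsto_id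
    have t2 : Tendsto (fun y : ℝ => Real.arctan (y / v)) atBot (nhds (-(Real.pi / 2))) :=
      (Real.tendsto_arctan_atBot.mono_right nhdsWithin_le_nhds).comp t1
    have t3 := (t2.div_const Real.pi).const_add ((1 : ℝ) / 2)
    convert t3 using 2
    field_simp
    ring
  rw [integral_Iic_of_hasDerivAt_of_tendsto' (fun x _ => pker_hasDeriv hv x)
    (pker_integrable hv).integrableOn htend, sub_zero]

lemma pker_intervalIntegrable (hv : 0 < v) (a b : ℝ) :
    IntervalIntegrable (pker v) volume a b :=
  (pker_cont hv).intervalIntegrable a b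

lemma pker_interval (hv : 0 < v) (c : ℝ) :
    ∫ y in (-(v * c))..(v * c), pker v y
      = 1 / Real.pi * ∫ u in (-c)..c, 1 / (1 + u ^ 2) := by
  rw [intervalIntegral.integral_eq_sub_of_hasDerivAt (fun x _ => pker_hasDeriv hv x)
    (pker_intervalIntegrable hv _ _), integral_one_div_one_add_sq]
  have e1 : v * c / v = c := by
    rw [mul_comm, mul_div_assoc, div_self hv.ne', mul_one]
  have e2 : -(v * c) / v = -c := by
    rw [neg_div, mul_comm, mul_div_assoc, div_self hv.ne', mul_one]
  rw [e1, e2]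
  ring_nf

lemma pker_total (hv : 0 < v) : ∫ y, pker v y = 1 := by
  have h : (fun y => pker v y)
      = fun y => (fun u : ℝ => 1 / (Real.pi * v) * (1 + u ^ 2)⁻¹) (y / v) :=
    funext fun y => pker_eq hv y
  rw [h, MeasureTheory.Measure.integral_comp_div (fun u : ℝ => 1 / (Real.pi * v) * (1 + u ^ 2)⁻¹) v,
    MeasureTheory.integral_const_mul, integral_univ_inv_one_add_sq, _root_.abs_of_pos hv,
    smul_eq_mul]
  field_simp


-- continue namespace BaiAux
variable {v B c : ℝ} {μ : Measure ℝ}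

lemma cdf_mono (μ : Measure ℝ) [IsFiniteMeasure μ] : Monotone (cdfOf μ) := fun a b hab =>
  ENNReal.toReal_mono (measure_ne_top _ _) (measure_mono (Iic_subset_Iic.2 hab))

lemma cdf_nonneg (μ : Measure ℝ) (x : ℝ) : 0 ≤ cdfOf μ x := ENNReal.toReal_nonneg

lemma cdf_le_one (μ : Measure ℝ) [IsProbabilityMeasure μ] (x : ℝ) : cdfOf μ x ≤ 1 := by
  have h := ENNReal.toReal_mono ENNReal.one_ne_top (prob_le_one (μ := μ) (s := Set.Iic x))
  simpa [cdfOf] using h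

lemma cdf_meas (μ : Measure ℝ) [IsFiniteMeasure μ] : Measurable (cdfOf μ) :=
  (cdf_mono μ).measurable

lemma cdf_eq_zero (hμ : μ (Set.Icc (-B) B)ᶜ = 0) {x : ℝ} (hx : x < -B) : cdfOf μ x = 0 := by
  rw [cdfOf]
  have h0 : μ (Set.Iic x) = 0 := by
    refine measure_mono_null ?_ hμ
    intro t ht
    simp only [mem_compl_iff, mem_Icc, not_and_or, not_le]
    left
    exact lt_of_le_of_lt ht hx
  simp [h0]

lemma cdf_eq_one [IsProbabilityMeasure μ] (hμ : μ (Set.Icc (-B) B)ᶜ = 0) {x : ℝ}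
    (hx : B ≤ x) : cdfOf μ x = 1 := by
  have h0 : μ (Set.Iic x)ᶜ = 0 := by
    refine measure_mono_null ?_ hμ
    intro t ht
    simp only [mem_compl_iff, mem_Iic, not_le] at ht
    simp only [mem_compl_iff, mem_Icc, not_and_or, not_le]
    right
    exact lt_of_le_of_lt hx ht
  have h1 : μ (Set.Iic x) = 1 := by
    have h2 := measure_add_measure_compl (μ := μ) (measurableSet_Iic (a := x))
    rw [h0, add_zero, measure_univ] at h2
    exact h2
  rw [cdfOf, h1, ENNReal.toReal_one]

noncomputable def Hfun (μ : Measure ℝ) (v x : ℝ) : ℝ :=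
  ∫ t, ((1 : ℝ) / 2 + Real.arctan ((x - t) / v) / Real.pi) ∂μ

lemma pker_fst_integrable (hv : 0 < v) (μ : Measure ℝ) [IsProbabilityMeasure μ] :
    Integrable (fun p : ℝ × ℝ => pker v p.1) ((volume : Measure ℝ).prod μ) := by
  have hm : AEStronglyMeasurable (fun p : ℝ × ℝ => pker v p.1) ((volume : Measure ℝ).prod μ) :=
    Continuous.aestronglyMeasurable (by exact (pker_cont hv).comp continuous_fst)
  rw [integrable_prod_iff hm]
  constructor
  · filter_upwards with y
    exact integrable_const _
  · simp only [integral_const, measure_univ, ENNReal.toReal_one, probReal_univ, one_smul]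
    exact (pker_integrable hv).norm

lemma conv_id (μ : Measure ℝ) [IsProbabilityMeasure μ] (hv : 0 < v) (x : ℝ) :
    ∫ y, cdfOf μ (x - y) * pker v y = Hfun μ v x := by
  have hSmeas : MeasurableSet {p : ℝ × ℝ | p.2 ≤ x - p.1} :=
    measurableSet_le measurable_snd (measurable_const.sub measurable_fst)
  have hgmeas : AEStronglyMeasurable (fun p : ℝ × ℝ => if p.2 ≤ x - p.1 then pker v p.1 else 0)
      ((volume : Measure ℝ).prod μ) := by
    have he : (fun p : ℝ × ℝ => if p.2 ≤ x - p.1 then pker v p.1 else 0)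
        = Set.indicator {p : ℝ × ℝ | p.2 ≤ x - p.1} (fun p => pker v p.1) := by
      funext p
      rw [Set.indicator_apply]
      rfl
    rw [he]
    exact (((pker_cont hv).comp continuous_fst).aestronglyMeasurable).indicator hSmeas
  have hgint : Integrable (fun p : ℝ × ℝ => if p.2 ≤ x - p.1 then pker v p.1 else 0)
      ((volume : Measure ℝ).prod μ) := by
    refine (pker_fst_integrable hv μ).mono' hgmeas ?_
    filter_upwards with p
    by_cases h : p.2 ≤ x - p.1 <;>
      simp [h, Real.norm_eq_abs, _root_.abs_of_nonneg (pker_nonneg hv _), pker_nonneg hv _]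
  have swap := integral_integral_swap
    (f := fun y t => if t ≤ x - y then pker v y else 0) hgint
  calc ∫ y, cdfOf μ (x - y) * pker v y
      = ∫ y, ∫ t, (if t ≤ x - y then pker v y else 0) ∂μ := by
        congr 1
        funext y
        have he : (fun t => if t ≤ x - y then pker v y else 0)
            = (Iic (x - y)).indicator (fun _ => pker v y) := by
          funext t
          rw [Set.indicator_apply]
          simp [mem_Iic]
        rw [he, integral_indicator_const _ measurableSet_Iic, cdfOf, smul_eq_mul]
        rfl
    _ = ∫ t, (∫ y, (if t ≤ x - y then pker v y else 0)) ∂μ := by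
          simpa using swap
    _ = Hfun μ v x := by
        rw [Hfun]
        congr 1
        funext t
        have he : (fun y => if t ≤ x - y then pker v y else 0)
            = (Iic (x - t)).indicator (pker v) := by
          funext y
          rw [Set.indicator_apply]
          refine if_congr ?_ rfl rfl
          simp only [mem_Iic]
          constructor <;> intro h <;> linarith
        rw [he, integral_indicator measurableSet_Iic, pker_integral_Iic hv]



lemma zline_im (v u t : ℝ) : ((u : ℂ) + (v : ℂ) * I - (t : ℂ)).im = v := by simp

lemma zline_re (v u t : ℝ) : ((u : ℂ) + (v : ℂ) * I - (t : ℂ)).re = u - t := by simp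

lemma zline_ne (hv : 0 < v) (u t : ℝ) : (u : ℂ) + (v : ℂ) * I - (t : ℂ) ≠ 0 := by
  intro h
  have := zline_im v u t
  rw [h] at this
  simp at this
  exact hv.ne' this.symm

lemma cauchy_norm_le (hv : 0 < v) (u t : ℝ) :
    ‖(((u : ℂ) + (v : ℂ) * I) - (t : ℂ))⁻¹‖ ≤ 1 / v := by
  rw [norm_inv, one_div]
  apply inv_anti₀ hv
  calc v = |((u : ℂ) + (v : ℂ) * I - (t : ℂ)).im| := by
        rw [zline_im]
        exact (_root_.abs_of_pos hv).symm
    _ ≤ ‖(u : ℂ) + (v : ℂ) * I - (t : ℂ)‖ := Complex.abs_im_le_norm _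
    _ = ‖(u : ℂ) + (v : ℂ) * I - (t : ℂ)‖ := rfl

lemma cauchy_integrand_cont (hv : 0 < v) (u : ℝ) :
    Continuous (fun t : ℝ => (((u : ℂ) + (v : ℂ) * I) - (t : ℂ))⁻¹) :=
  (continuous_const.sub Complex.continuous_ofReal).inv₀ (zline_ne hv u)

lemma cauchy_integrand_integrable (μ : Measure ℝ) [IsProbabilityMeasure μ] (hv : 0 < v)
    (u : ℝ) : Integrable (fun t : ℝ => (((u : ℂ) + (v : ℂ) * I) - (t : ℂ))⁻¹) μ := by
  refine (integrable_const (1 / v : ℝ)).mono'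
    (cauchy_integrand_cont hv u).aestronglyMeasurable ?_
  filter_upwards with t
  exact cauchy_norm_le hv u t

lemma poisson_cont (hv : 0 < v) :
    Continuous (fun p : ℝ × ℝ => v / ((p.1 - p.2) ^ 2 + v ^ 2)) := by
  apply continuous_const.div (by continuity)
  intro p
  positivity

lemma im_cauchyT (μ : Measure ℝ) [IsProbabilityMeasure μ] (hv : 0 < v) (u : ℝ) :
    (cauchyT μ ((u : ℂ) + (v : ℂ) * I)).im
      = - ∫ t, v / ((u - t) ^ 2 + v ^ 2) ∂μ := by
  rw [cauchyT]
  have h := ContinuousLinearMap.integral_comp_comm Complex.imCLM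
    (cauchy_integrand_integrable μ hv u)
  simp only [Complex.imCLM_apply] at h
  rw [← h, ← integral_neg]
  apply integral_congr_ae
  filter_upwards with t
  rw [Complex.inv_im, Complex.normSq_apply, zline_im, zline_re, neg_div]
  congr 1
  congr 1
  ring

lemma cauchyT_cont (μ : Measure ℝ) [IsProbabilityMeasure μ] (hv : 0 < v) :
    Continuous (fun u : ℝ => cauchyT μ ((u : ℂ) + (v : ℂ) * I)) := by
  apply continuous_of_dominated (bound := fun _ => 1 / v)
  · exact fun u => (cauchy_integrand_cont hv u).aestronglyMeasurable
  · intro u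
    filter_upwards with t
    exact cauchy_norm_le hv u t
  · exact integrable_const _
  · filter_upwards with t
    exact ((Complex.continuous_ofReal.add continuous_const).sub continuous_const).inv₀
      (fun u => zline_ne hv u t)

lemma arctan_integrand_integrable (μ : Measure ℝ) [IsProbabilityMeasure μ] (hv : 0 < v)
    (b : ℝ) : Integrable (fun t => (1 : ℝ) / 2 + Real.arctan ((b - t) / v) / Real.pi) μ := by
  refine (integrable_const (1 : ℝ)).mono'
    (Continuous.aestronglyMeasurable (by continuity)) ?_
  filter_upwards with t
  rw [Real.norm_eq_abs]
  have h1 := Real.arctan_lt_pi_div_two ((b - t) / v)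
  have h2 := Real.neg_pi_div_two_lt_arctan ((b - t) / v)
  have hπ := Real.pi_pos
  have h3 : Real.arctan ((b - t) / v) / Real.pi ≤ 1 / 2 := by
    rw [div_le_iff₀ hπ]
    linarith
  have h4 : -(1 / 2 : ℝ) ≤ Real.arctan ((b - t) / v) / Real.pi := by
    rw [le_div_iff₀ hπ]
    linarith
  rw [abs_le]
  constructor <;> linarith

lemma H_sub (μ : Measure ℝ) [IsProbabilityMeasure μ] (hv : 0 < v) {a x : ℝ} (hax : a ≤ x) :
    Hfun μ v x - Hfun μ v a
      = (1 / Real.pi) * ∫ u in a..x, (∫ t, v / ((u - t) ^ 2 + v ^ 2) ∂μ) := by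
  have hker : ∀ t : ℝ, ∫ u in a..x, v / ((u - t) ^ 2 + v ^ 2)
      = Real.arctan ((x - t) / v) - Real.arctan ((a - t) / v) := by
    intro t
    have hd : ∀ u : ℝ, HasDerivAt (fun w => Real.arctan ((w - t) / v))
        (v / ((u - t) ^ 2 + v ^ 2)) u := by
      intro u
      have h1 : HasDerivAt (fun w : ℝ => (w - t) / v) (1 / v) u := by
        simpa using ((hasDerivAt_id u).sub_const t).div_const v
      have h2 := (Real.hasDerivAt_arctan ((u - t) / v)).comp u h1
      refine h2.congr_deriv ?_
      field_simp
      ring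
    rw [intervalIntegral.integral_eq_sub_of_hasDerivAt (fun u _ => hd u)
      (Continuous.intervalIntegrable (by
        apply continuous_const.div (by continuity)
        intro u
        positivity) _ _)]
  haveI : IsFiniteMeasure ((volume : Measure ℝ).restrict (Ioc a x)) :=
    ⟨by rw [Measure.restrict_apply_univ]; exact measure_Ioc_lt_top⟩
  have hint : Integrable (fun p : ℝ × ℝ => v / ((p.1 - p.2) ^ 2 + v ^ 2))
      (((volume : Measure ℝ).restrict (Ioc a x)).prod μ) := by
    refine (integrable_const (1 / v : ℝ)).mono' (poisson_cont hv).aestronglyMeasurable ?_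
    filter_upwards with p
    rw [Real.norm_eq_abs, _root_.abs_of_nonneg (by positivity)]
    rw [div_le_div_iff₀ (by positivity) hv]
    nlinarith [sq_nonneg (p.1 - p.2)]
  have swap := integral_integral_swap (f := fun u t => v / ((u - t) ^ 2 + v ^ 2)) hint
  have e1 : ∫ u in a..x, (∫ t, v / ((u - t) ^ 2 + v ^ 2) ∂μ)
      = ∫ t, (∫ u in Ioc a x, v / ((u - t) ^ 2 + v ^ 2)) ∂μ := by
    rw [intervalIntegral.integral_of_le hax]
    simpa using swap
  have e2 : ∀ t : ℝ, ∫ u in Ioc a x, v / ((u - t) ^ 2 + v ^ 2)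
      = Real.arctan ((x - t) / v) - Real.arctan ((a - t) / v) := by
    intro t
    rw [← intervalIntegral.integral_of_le hax]
    exact hker t
  rw [e1]
  simp only [e2]
  rw [Hfun, Hfun, ← integral_sub (arctan_integrand_integrable μ hv x)
    (arctan_integrand_integrable μ hv a)]
  rw [← integral_const_mul]
  apply integral_congr_ae
  filter_upwards with t
  field_simp
  ring



lemma integrableOn_of_bdd {f : ℝ → ℝ} {s : Set ℝ} (hvol : volume s < ⊤)
    (hm : Measurable f) {C : ℝ} (hb : ∀ y, |f y| ≤ C) : IntegrableOn f s volume := by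
  haveI : IsFiniteMeasure (volume.restrict s) :=
    ⟨by rw [Measure.restrict_apply_univ]; exact hvol⟩
  exact (integrable_const C).mono' hm.aestronglyMeasurable.restrict
    (ae_of_all _ fun y => by rw [Real.norm_eq_abs]; exact hb y)

lemma abs_sub_le' (a b : ℝ) : |a - b| ≤ |a| + |b| := by
  rw [sub_eq_add_neg]
  exact (abs_add_le _ _).trans (by rw [abs_neg])

lemma le_of_forall_pos_le_add' {a b : ℝ} (h : ∀ ε : ℝ, 0 < ε → a ≤ b + ε) : a ≤ b := by
  by_contra hab
  push_neg at hab
  have := h ((a - b) / 2) (by linarith)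
  linarith

lemma core (hv : 0 < v) (hc : 0 < c) {γ Δ J d0 : ℝ}
    (hγeq : ∫ y in Ioo (-(v * c)) (v * c), pker v y = γ)
    {W : ℝ → ℝ} (hWmeas : Measurable W) (hWle : ∀ s, |W s| ≤ Δ)
    {Gm : ℝ → ℝ} (hGmeas : Measurable Gm) (hGbd : ∀ s, |Gm s| ≤ 1)
    {x0 x1 : ℝ}
    (hpt : ∀ y ∈ Ioo (-(v * c)) (v * c), d0 - |Gm (x1 - y) - Gm x0| ≤ W (x1 - y))
    (hmod : (∫ y in Ioo (-(v * c)) (v * c), |Gm (x1 - y) - Gm x0|) ≤ J) :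
    γ * d0 - (1 - γ) * Δ - (1 / (Real.pi * v)) * J ≤ ∫ y, W (x1 - y) * pker v y := by
  set S : Set ℝ := Ioo (-(v * c)) (v * c) with hSdef
  have hS : MeasurableSet S := measurableSet_Ioo
  have hSvol : volume S < ⊤ := measure_Ioo_lt_top
  have hΔ0 : 0 ≤ Δ := le_trans (abs_nonneg _) (hWle 0)
  have hπv : (0:ℝ) < Real.pi * v := by positivity
  -- measurability helpers
  have hWm : Measurable (fun y => W (x1 - y)) := hWmeas.comp (measurable_const.sub measurable_id)
  set g : ℝ → ℝ := fun y => |Gm (x1 - y) - Gm x0| with hgdef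
  have hGm' : Measurable g :=
    ((hGmeas.comp (measurable_const.sub measurable_id)).sub measurable_const).abs
  have hGbd' : ∀ y, |g y| ≤ 2 := by
    intro y
    show |(|Gm (x1 - y) - Gm x0|)| ≤ 2
    rw [_root_.abs_abs]
    calc |Gm (x1 - y) - Gm x0| ≤ |Gm (x1 - y)| + |Gm x0| := abs_sub_le' _ _
      _ ≤ 1 + 1 := add_le_add (hGbd _) (hGbd _)
      _ = 2 := by norm_num
  -- global integrability of the main integrand
  have h_f : Integrable (fun y => W (x1 - y) * pker v y) volume := by
    refine ((pker_integrable hv).const_mul Δ).mono'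
      ((hWm.mul (pker_meas hv)).aestronglyMeasurable) ?_
    filter_upwards with y
    rw [Real.norm_eq_abs, abs_mul, _root_.abs_of_nonneg (pker_nonneg hv y)]
    exact mul_le_mul_of_nonneg_right (hWle _) (pker_nonneg hv _)
  -- complement part
  have hpkerSc : ∫ y in Sᶜ, pker v y = 1 - γ := by
    have h := integral_add_compl hS (pker_integrable hv)
    rw [pker_total hv, hγeq] at h
    linarith
  have hSc : -Δ * (1 - γ) ≤ ∫ y in Sᶜ, W (x1 - y) * pker v y := by
    have hmono := setIntegral_mono_on (s := Sᶜ)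
      (((pker_integrable hv).const_mul (-Δ)).integrableOn)
      (h_f.integrableOn) hS.compl
      (fun y _ => by
        refine mul_le_mul_of_nonneg_right ?_ (pker_nonneg hv y)
        exact neg_le_of_abs_le (hWle _))
    rw [integral_const_mul, hpkerSc] at hmono
    exact hmono
  -- S part
  have hmodInt : IntegrableOn (fun y => g y) S :=
    integrableOn_of_bdd hSvol hGm' hGbd'
  have hlow : IntegrableOn (fun y => (d0 - g y) * pker v y) S := by
    refine integrableOn_of_bdd hSvol ((measurable_const.sub hGm').mul (pker_meas hv))
      (C := (|d0| + 2) * (1 / (Real.pi * v))) ?_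
    intro y
    rw [abs_mul, _root_.abs_of_nonneg (pker_nonneg hv y)]
    refine mul_le_mul ?_ (pker_le hv y) (pker_nonneg hv y) (by positivity)
    calc |d0 - g y| ≤ |d0| + |g y| := abs_sub_le' _ _
      _ ≤ |d0| + 2 := by linarith [hGbd' y]
  have hgp : IntegrableOn (fun y => g y * pker v y) S := by
    refine integrableOn_of_bdd hSvol (hGm'.mul (pker_meas hv))
      (C := 2 * (1 / (Real.pi * v))) ?_
    intro y
    rw [abs_mul, _root_.abs_of_nonneg (pker_nonneg hv y)]
    have h2 : |g y| ≤ 2 := hGbd' y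
    exact mul_le_mul h2 (pker_le hv y) (pker_nonneg hv y) (by norm_num)
  have hstep1 : ∫ y in S, (d0 - g y) * pker v y
      ≤ ∫ y in S, W (x1 - y) * pker v y :=
    setIntegral_mono_on hlow h_f.integrableOn hS
      (fun y hy => mul_le_mul_of_nonneg_right (hpt y hy) (pker_nonneg hv y))
  have hstep2 : ∫ y in S, (d0 - g y) * pker v y
      = d0 * γ - ∫ y in S, g y * pker v y := by
    have he : ∀ y, (d0 - g y) * pker v y
        = d0 * pker v y - g y * pker v y := fun y => by ring
    rw [integral_congr_ae (ae_of_all _ fun y => he y)]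
    rw [integral_sub (((pker_integrable hv).const_mul d0).integrableOn) hgp]
    rw [integral_const_mul, hγeq]
  have hstep3 : ∫ y in S, g y * pker v y ≤ (1 / (Real.pi * v)) * J := by
    have h1 : ∫ y in S, g y * pker v y
        ≤ ∫ y in S, (1 / (Real.pi * v)) * g y := by
      refine setIntegral_mono_on hgp (hmodInt.const_mul _) hS (fun y _ => ?_)
      rw [mul_comm (1 / (Real.pi * v))]
      exact mul_le_mul_of_nonneg_left (pker_le hv y) (abs_nonneg _)
    rw [integral_const_mul] at h1
    exact h1.trans (mul_le_mul_of_nonneg_left hmod (by positivity))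
  have htot := integral_add_compl hS h_f
  linarith


end BaiAux
set_option maxHeartbeats 2000000 in
open BaiAux in
/-- **Bai's inequality.** For two probability measures supported on `[−B,B]`, the Kolmogorov
distance between their distribution functions is controlled by the distance between their
Cauchy transforms along a horizontal line `Im z = v`. -/
theorem bai_inequality (B A c γ κ : ℝ) (μ ν : Measure ℝ)
    [IsProbabilityMeasure μ] [IsProbabilityMeasure ν]
    (hμ : μ (Set.Icc (-B) B)ᶜ = 0) (hν : ν (Set.Icc (-B) B)ᶜ = 0)
    (hAB : B < A) (hγ : 1 / 2 < γ) (hc : 0 < c)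
    (hγc : γ = (1 / Real.pi) * ∫ u in (-c)..c, 1 / (1 + u ^ 2))
    (hκdef : κ = 4 * B / (Real.pi * (A - B) * (2 * γ - 1))) (hκ : κ < 1)
    (v : ℝ) (hv : 0 < v) :
    (⨆ x : ℝ, |cdfOf μ x - cdfOf ν x|) ≤
      (1 / (Real.pi * (1 - κ) * (2 * γ - 1))) *
        ((∫ u in (-A)..A,
            ‖cauchyT μ ((u : ℂ) + (v : ℂ) * I) - cauchyT ν ((u : ℂ) + (v : ℂ) * I)‖) +
         (1 / v) * ⨆ x : ℝ, ∫ y in (-(2 * v * c))..(2 * v * c), |cdfOf ν (x + y) - cdfOf ν x|) := by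
  classical
  have hπ := Real.pi_pos
  have hvc : 0 < v * c := mul_pos hv hc
  have hB0 : 0 ≤ B := by
    by_contra hB
    push_neg at hB
    have he : Set.Icc (-B) B = (∅ : Set ℝ) := Set.Icc_eq_empty (by intro h; linarith)
    rw [he, Set.compl_empty] at hμ
    have h1 : (μ : Measure ℝ) Set.univ = 1 := measure_univ
    rw [hμ] at h1
    exact zero_ne_one h1
  have hAB0 : 0 < A - B := by linarith
  have hA0 : 0 < A := by linarith
  have h2γ : 0 < 2 * γ - 1 := by linarith
  have hγ0 : 0 < γ := by linarith
  have hγ1 : γ < 1 := by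
    rw [hγc, integral_one_div_one_add_sq, Real.arctan_neg, sub_neg_eq_add]
    have h1 := Real.arctan_lt_pi_div_two c
    have h2 : (1 / Real.pi) * (Real.arctan c + Real.arctan c) < (1 / Real.pi) * Real.pi :=
      mul_lt_mul_of_pos_left (by linarith) (by positivity)
    rwa [one_div_mul_cancel hπ.ne'] at h2
  have hFm : Measurable (cdfOf μ) := cdf_meas μ
  have hGm : Measurable (cdfOf ν) := cdf_meas ν
  have hDm : Measurable (fun s : ℝ => cdfOf μ s - cdfOf ν s) := hFm.sub hGm
  have hGabs : ∀ s : ℝ, |cdfOf ν s| ≤ 1 := fun s => by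
    rw [_root_.abs_of_nonneg (cdf_nonneg ν s)]
    exact cdf_le_one ν s
  have hDabs1 : ∀ x : ℝ, |cdfOf μ x - cdfOf ν x| ≤ 1 := fun x => by
    have h1 := cdf_nonneg μ x
    have h2 := cdf_le_one μ x
    have h3 := cdf_nonneg ν x
    have h4 := cdf_le_one ν x
    rw [abs_le]
    constructor <;> linarith
  have hbdd : BddAbove (Set.range fun x : ℝ => |cdfOf μ x - cdfOf ν x|) :=
    ⟨1, by rintro r ⟨x, rfl⟩; exact hDabs1 x⟩
  set Δ : ℝ := ⨆ x : ℝ, |cdfOf μ x - cdfOf ν x| with hΔdef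
  have hDle : ∀ x : ℝ, |cdfOf μ x - cdfOf ν x| ≤ Δ := fun x => le_ciSup hbdd x
  have hΔ0 : 0 ≤ Δ := le_trans (abs_nonneg _) (hDle 0)
  clear_value Δ
  have hDzero : ∀ s : ℝ, (B ≤ s ∨ s < -B) → cdfOf μ s - cdfOf ν s = 0 := by
    intro s hs
    rcases hs with hs | hs
    · rw [cdf_eq_one hμ hs, cdf_eq_one hν hs, sub_self]
    · rw [cdf_eq_zero hμ hs, cdf_eq_zero hν hs, sub_self]
  -- the modulus-of-continuity integrals
  have hJint : ∀ x a b : ℝ,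
      IntervalIntegrable (fun y => |cdfOf ν (x + y) - cdfOf ν x|) volume a b := by
    intro x a b
    rw [intervalIntegrable_iff]
    refine integrableOn_of_bdd ?_ ?_ (C := 2) ?_
    · rw [Set.uIoc]
      exact measure_Ioc_lt_top
    · exact ((hGm.comp (measurable_id.const_add x)).sub measurable_const).abs
    · intro y
      rw [_root_.abs_abs]
      exact (abs_sub_le' _ _).trans (by linarith [hGabs (x + y), hGabs x])
  have hJbddAbove : BddAbove (Set.range fun x : ℝ =>
      ∫ y in (-(2 * v * c))..(2 * v * c), |cdfOf ν (x + y) - cdfOf ν x|) := by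
    refine ⟨(2 * v * c - -(2 * v * c)) * 2, ?_⟩
    rintro r ⟨x, rfl⟩
    calc ∫ y in (-(2 * v * c))..(2 * v * c), |cdfOf ν (x + y) - cdfOf ν x|
        ≤ ∫ _y in (-(2 * v * c))..(2 * v * c), (2 : ℝ) := by
          refine intervalIntegral.integral_mono_on (by linarith) (hJint x _ _)
            intervalIntegrable_const (fun y _ => ?_)
          exact (abs_sub_le' _ _).trans (by linarith [hGabs (x + y), hGabs x])
      _ = (2 * v * c - -(2 * v * c)) * 2 := by
          rw [intervalIntegral.integral_const, smul_eq_mul]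
  set J : ℝ := ⨆ x : ℝ, ∫ y in (-(2 * v * c))..(2 * v * c), |cdfOf ν (x + y) - cdfOf ν x|
    with hJdef
  have hJle : ∀ x : ℝ,
      (∫ y in (-(2 * v * c))..(2 * v * c), |cdfOf ν (x + y) - cdfOf ν x|) ≤ J :=
    fun x => le_ciSup hJbddAbove x
  have hJ0 : 0 ≤ J :=
    le_trans (intervalIntegral.integral_nonneg (by linarith) fun y _ => abs_nonneg _) (hJle 0)
  clear_value J
  set II : ℝ := ∫ u in (-A)..A,
      ‖cauchyT μ ((u : ℂ) + (v : ℂ) * I) - cauchyT ν ((u : ℂ) + (v : ℂ) * I)‖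
    with hIdef
  have hGdcont : Continuous (fun u : ℝ =>
      ‖cauchyT μ ((u : ℂ) + (v : ℂ) * I) - cauchyT ν ((u : ℂ) + (v : ℂ) * I)‖) :=
    continuous_norm.comp ((cauchyT_cont μ hv).sub (cauchyT_cont ν hv))
  have hII0 : 0 ≤ II := by
    rw [hIdef]
    exact intervalIntegral.integral_nonneg (by linarith) fun u _ => norm_nonneg _
  clear_value II
  -- convolution identity for the difference
  have hFGint : ∀ x : ℝ, Integrable (fun y => cdfOf μ (x - y) * pker v y) volume := by
    intro x
    refine (pker_integrable hv).mono'
      ((hFm.comp (measurable_const.sub measurable_id)).mul (pker_meas hv)).aestronglyMeasurable ?_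
    filter_upwards with y
    rw [Real.norm_eq_abs, abs_mul, _root_.abs_of_nonneg (pker_nonneg hv y),
      _root_.abs_of_nonneg (cdf_nonneg μ _)]
    simpa using mul_le_mul_of_nonneg_right (cdf_le_one μ (x - y)) (pker_nonneg hv y)
  have hFGint' : ∀ x : ℝ, Integrable (fun y => cdfOf ν (x - y) * pker v y) volume := by
    intro x
    refine (pker_integrable hv).mono'
      ((hGm.comp (measurable_const.sub measurable_id)).mul (pker_meas hv)).aestronglyMeasurable ?_
    filter_upwards with y
    rw [Real.norm_eq_abs, abs_mul, _root_.abs_of_nonneg (pker_nonneg hv y),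
      _root_.abs_of_nonneg (cdf_nonneg ν _)]
    simpa using mul_le_mul_of_nonneg_right (cdf_le_one ν (x - y)) (pker_nonneg hv y)
  have hHdEq : ∀ x : ℝ, Hfun μ v x - Hfun ν v x
      = ∫ y, (cdfOf μ (x - y) - cdfOf ν (x - y)) * pker v y := by
    intro x
    rw [← conv_id μ hv x, ← conv_id ν hv x, ← integral_sub (hFGint x) (hFGint' x)]
    congr 1
    funext y
    ring
  -- tail bound
  have htail : ∀ x : ℝ, A ≤ |x| →
      |Hfun μ v x - Hfun ν v x| ≤ Δ * B / (Real.pi * (A - B)) := by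
    intro x hx
    rw [hHdEq x]
    have habs : |∫ y, (cdfOf μ (x - y) - cdfOf ν (x - y)) * pker v y|
        ≤ ∫ y, |cdfOf μ (x - y) - cdfOf ν (x - y)| * pker v y := by
      have h1 := MeasureTheory.norm_integral_le_integral_norm
        (μ := (volume : Measure ℝ)) (f := fun y => (cdfOf μ (x - y) - cdfOf ν (x - y)) * pker v y)
      simp only [Real.norm_eq_abs] at h1
      refine h1.trans (le_of_eq ?_)
      apply integral_congr_ae
      filter_upwards with y
      rw [abs_mul, _root_.abs_of_nonneg (pker_nonneg hv y)]
    have hint3 : Integrable (fun y => |cdfOf μ (x - y) - cdfOf ν (x - y)| * pker v y) volume := by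
      refine (pker_integrable hv).mono'
        (((hDm.comp (measurable_const.sub measurable_id)).abs).mul
          (pker_meas hv)).aestronglyMeasurable ?_
      filter_upwards with y
      rw [Real.norm_eq_abs, abs_mul, _root_.abs_abs, _root_.abs_of_nonneg (pker_nonneg hv y)]
      simpa using mul_le_mul_of_nonneg_right (hDabs1 (x - y)) (pker_nonneg hv y)
    have hindint : Integrable ((Set.Icc (x - B) (x + B)).indicator
        (fun _ => Δ * (1 / (2 * Real.pi * (A - B))))) volume := by
      rw [integrable_indicator_iff measurableSet_Icc]
      exact integrableOn_const measure_Icc_lt_top.ne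
    have hpw : ∀ y : ℝ, |cdfOf μ (x - y) - cdfOf ν (x - y)| * pker v y
        ≤ (Set.Icc (x - B) (x + B)).indicator (fun _ => Δ * (1 / (2 * Real.pi * (A - B)))) y := by
      intro y
      by_cases hy : y ∈ Set.Icc (x - B) (x + B)
      · rw [Set.indicator_of_mem hy]
        obtain ⟨hy1, hy2⟩ := hy
        have hxy : |x - y| ≤ B := abs_le.mpr ⟨by linarith, by linarith⟩
        have h5 := abs_sub_abs_le_abs_sub x y
        have hyabs : A - B ≤ |y| := by linarith
        exact mul_le_mul (hDle _) (pker_le_abs hv hAB0 hyabs) (pker_nonneg hv y) hΔ0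
      · rw [Set.indicator_of_notMem hy]
        rw [Set.mem_Icc, not_and_or, not_le, not_le] at hy
        have hD0 : cdfOf μ (x - y) - cdfOf ν (x - y) = 0 := by
          apply hDzero
          rcases hy with hy | hy
          · left; linarith
          · right; linarith
        rw [hD0, abs_zero, zero_mul]
    have hmono := integral_mono hint3 hindint hpw
    have hindval : (∫ y, (Set.Icc (x - B) (x + B)).indicator
        (fun _ => Δ * (1 / (2 * Real.pi * (A - B)))) y) = Δ * B / (Real.pi * (A - B)) := by
      rw [integral_indicator_const _ measurableSet_Icc, Real.volume_real_Icc_of_le (by linarith), smul_eq_mul,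
        show x + B - (x - B) = 2 * B by ring]
      field_simp
    rw [hindval] at hmono
    exact habs.trans hmono
  -- middle bound
  have hmid : ∀ x : ℝ, |x| ≤ A →
      |Hfun μ v x - Hfun ν v x| ≤ 1 / Real.pi * II + Δ * B / (Real.pi * (A - B)) := by
    intro x hx
    obtain ⟨hx1, hx2⟩ := abs_le.1 hx
    have h1 := H_sub μ hv (a := -A) (x := x) hx1
    have h2 := H_sub ν hv (a := -A) (x := x) hx1
    have hKμeq : ∀ u : ℝ, (∫ t, v / ((u - t) ^ 2 + v ^ 2) ∂μ)
        = -((cauchyT μ ((u : ℂ) + (v : ℂ) * I)).im) := fun u => by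
      rw [im_cauchyT μ hv u, neg_neg]
    have hKνeq : ∀ u : ℝ, (∫ t, v / ((u - t) ^ 2 + v ^ 2) ∂ν)
        = -((cauchyT ν ((u : ℂ) + (v : ℂ) * I)).im) := fun u => by
      rw [im_cauchyT ν hv u, neg_neg]
    have hcμ : Continuous (fun u : ℝ => -((cauchyT μ ((u : ℂ) + (v : ℂ) * I)).im)) :=
      (Complex.continuous_im.comp (cauchyT_cont μ hv)).neg
    have hcν : Continuous (fun u : ℝ => -((cauchyT ν ((u : ℂ) + (v : ℂ) * I)).im)) :=
      (Complex.continuous_im.comp (cauchyT_cont ν hv)).neg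
    rw [show (∫ u in (-A)..x, (∫ t, v / ((u - t) ^ 2 + v ^ 2) ∂μ))
        = ∫ u in (-A)..x, -((cauchyT μ ((u : ℂ) + (v : ℂ) * I)).im) from
      intervalIntegral.integral_congr fun u _ => hKμeq u] at h1
    rw [show (∫ u in (-A)..x, (∫ t, v / ((u - t) ^ 2 + v ^ 2) ∂ν))
        = ∫ u in (-A)..x, -((cauchyT ν ((u : ℂ) + (v : ℂ) * I)).im) from
      intervalIntegral.integral_congr fun u _ => hKνeq u] at h2
    have htailA := htail (-A) (by rw [abs_neg, _root_.abs_of_pos hA0])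
    have hsub := intervalIntegral.integral_sub
      (hcμ.intervalIntegrable (μ := (volume : Measure ℝ)) (-A) x)
      (hcν.intervalIntegrable (μ := (volume : Measure ℝ)) (-A) x)
    have h4 : |∫ u in (-A)..x, ((-((cauchyT μ ((u : ℂ) + (v : ℂ) * I)).im))
        - (-((cauchyT ν ((u : ℂ) + (v : ℂ) * I)).im)))| ≤ II := by
      refine (intervalIntegral.abs_integral_le_integral_abs (μ := (volume : Measure ℝ))
        (f := fun u => (-((cauchyT μ ((u : ℂ) + (v : ℂ) * I)).im))
          - (-((cauchyT ν ((u : ℂ) + (v : ℂ) * I)).im))) hx1).trans ?_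
      have h5 : (∫ u in (-A)..x, |(-((cauchyT μ ((u : ℂ) + (v : ℂ) * I)).im))
          - (-((cauchyT ν ((u : ℂ) + (v : ℂ) * I)).im))|)
          ≤ ∫ u in (-A)..x,
            ‖cauchyT μ ((u : ℂ) + (v : ℂ) * I) - cauchyT ν ((u : ℂ) + (v : ℂ) * I)‖ := by
        refine intervalIntegral.integral_mono_on hx1
          (((hcμ.sub hcν).abs).intervalIntegrable _ _) (hGdcont.intervalIntegrable _ _)
          (fun u _ => ?_)
        have he : (-((cauchyT μ ((u : ℂ) + (v : ℂ) * I)).im))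
            - (-((cauchyT ν ((u : ℂ) + (v : ℂ) * I)).im))
            = -((cauchyT μ ((u : ℂ) + (v : ℂ) * I) - cauchyT ν ((u : ℂ) + (v : ℂ) * I)).im) := by
          rw [Complex.sub_im]
          ring
        rw [he, abs_neg]
        exact Complex.abs_im_le_norm _
      refine h5.trans ?_
      rw [hIdef]
      refine intervalIntegral.integral_mono_interval le_rfl hx1 hx2 ?_
        (hGdcont.intervalIntegrable _ _)
      exact Filter.Eventually.of_forall fun u => norm_nonneg _
    have h6 : Hfun μ v x - Hfun ν v x = (Hfun μ v (-A) - Hfun ν v (-A))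
        + 1 / Real.pi * (∫ u in (-A)..x, ((-((cauchyT μ ((u : ℂ) + (v : ℂ) * I)).im))
          - (-((cauchyT ν ((u : ℂ) + (v : ℂ) * I)).im)))) := by
      rw [hsub, mul_sub]
      linarith
    have h7 : 0 ≤ (1 : ℝ) / Real.pi := by positivity
    calc |Hfun μ v x - Hfun ν v x|
        ≤ |Hfun μ v (-A) - Hfun ν v (-A)|
          + 1 / Real.pi * |∫ u in (-A)..x, ((-((cauchyT μ ((u : ℂ) + (v : ℂ) * I)).im))
            - (-((cauchyT ν ((u : ℂ) + (v : ℂ) * I)).im)))| := by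
          rw [h6]
          refine (abs_add_le _ _).trans ?_
          rw [abs_mul, _root_.abs_of_nonneg h7]
      _ ≤ Δ * B / (Real.pi * (A - B)) + 1 / Real.pi * II :=
          add_le_add htailA (mul_le_mul_of_nonneg_left h4 h7)
      _ = 1 / Real.pi * II + Δ * B / (Real.pi * (A - B)) := by ring
  have hHbd : ∀ x : ℝ, |Hfun μ v x - Hfun ν v x|
      ≤ 1 / Real.pi * II + Δ * B / (Real.pi * (A - B)) := by
    intro x
    rcases le_total |x| A with h | h
    · exact hmid x h
    · refine (htail x h).trans ?_
      have h0 : 0 ≤ 1 / Real.pi * II := mul_nonneg (by positivity) hII0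
      linarith
  -- γ as an integral of the kernel
  have hγIoo : ∫ y in Set.Ioo (-(v * c)) (v * c), pker v y = γ := by
    rw [← MeasureTheory.integral_Ioc_eq_integral_Ioo,
      ← intervalIntegral.integral_of_le (by linarith : -(v * c) ≤ v * c),
      pker_interval hv c]
    exact hγc.symm
  -- change of variables for the modulus integrals
  have hchange : ∀ x1 x0 : ℝ,
      (∫ y in Set.Ioo (-(v * c)) (v * c), |cdfOf ν (x1 - y) - cdfOf ν x0|)
      = ∫ y in (x1 - v * c - x0)..(x1 + v * c - x0), |cdfOf ν (x0 + y) - cdfOf ν x0| := by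
    intro x1 x0
    rw [← MeasureTheory.integral_Ioc_eq_integral_Ioo,
      ← intervalIntegral.integral_of_le (by linarith : -(v * c) ≤ v * c),
      intervalIntegral.integral_comp_sub_left (fun s => |cdfOf ν s - cdfOf ν x0|) x1,
      intervalIntegral.integral_comp_add_left (fun s => |cdfOf ν s - cdfOf ν x0|) x0,
      show x0 + (x1 - v * c - x0) = x1 - v * c from by ring,
      show x0 + (x1 + v * c - x0) = x1 - -(v * c) from by ring]
  have hmodJ : ∀ x0 a b : ℝ, -(2 * v * c) ≤ a → a ≤ b → b ≤ 2 * v * c →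
      (∫ y in a..b, |cdfOf ν (x0 + y) - cdfOf ν x0|) ≤ J := by
    intro x0 a b ha hab hb
    refine le_trans (intervalIntegral.integral_mono_interval ha hab hb
      (Filter.Eventually.of_forall fun y => abs_nonneg _) (hJint x0 _ _)) (hJle x0)
  -- smoothing inequality
  have hsmooth : (2 * γ - 1) * Δ
      ≤ (1 / Real.pi * II + Δ * B / (Real.pi * (A - B))) + 1 / (Real.pi * v) * J := by
    rcases eq_or_lt_of_le hΔ0 with hΔz | hΔpos
    · have h0 : 0 ≤ 1 / Real.pi * II := mul_nonneg (by positivity) hII0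
      have h1 : 0 ≤ 1 / (Real.pi * v) * J := mul_nonneg (by positivity) hJ0
      rw [← hΔz, mul_zero, zero_mul, zero_div]
      linarith
    · refine le_of_forall_pos_le_add' ?_
      intro ε hε
      obtain ⟨x0, hx0⟩ := exists_lt_of_lt_ciSup
        (show Δ - ε < ⨆ x : ℝ, |cdfOf μ x - cdfOf ν x| from by rw [← hΔdef]; linarith)
      set d0 : ℝ := |cdfOf μ x0 - cdfOf ν x0| with hd0def
      have hd0Δ : d0 ≤ Δ := hDle x0
      have hkey : γ * d0 - (1 - γ) * Δ - 1 / (Real.pi * v) * J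
          ≤ 1 / Real.pi * II + Δ * B / (Real.pi * (A - B)) := by
        rcases le_or_gt 0 (cdfOf μ x0 - cdfOf ν x0) with hsgn | hsgn
        · -- positive case: move to the right
          have hDx0 : cdfOf μ x0 - cdfOf ν x0 = d0 := (_root_.abs_of_nonneg hsgn).symm
          have hpt : ∀ y ∈ Set.Ioo (-(v * c)) (v * c),
              d0 - |cdfOf ν (x0 + v * c - y) - cdfOf ν x0|
                ≤ cdfOf μ (x0 + v * c - y) - cdfOf ν (x0 + v * c - y) := by
            intro y hy
            obtain ⟨hy1, hy2⟩ := hy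
            have hmono := cdf_mono μ (show x0 ≤ x0 + v * c - y by linarith)
            have habs := le_abs_self (cdfOf ν (x0 + v * c - y) - cdfOf ν x0)
            linarith
          have hmod : (∫ y in Set.Ioo (-(v * c)) (v * c),
              |cdfOf ν (x0 + v * c - y) - cdfOf ν x0|) ≤ J := by
            rw [hchange (x0 + v * c) x0]
            exact hmodJ x0 _ _ (by linarith) (by linarith) (by linarith)
          have hcore := core hv hc hγIoo hDm hDle hGm hGabs hpt hmod
          refine hcore.trans ?_
          calc (∫ y, (cdfOf μ (x0 + v * c - y) - cdfOf ν (x0 + v * c - y)) * pker v y)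
              = Hfun μ v (x0 + v * c) - Hfun ν v (x0 + v * c) := (hHdEq _).symm
            _ ≤ |Hfun μ v (x0 + v * c) - Hfun ν v (x0 + v * c)| := le_abs_self _
            _ ≤ _ := hHbd _
        · -- negative case: move to the left
          have hDx0 : cdfOf μ x0 - cdfOf ν x0 = -d0 := by
            rw [hd0def, _root_.abs_of_neg hsgn, neg_neg]
          have hpt : ∀ y ∈ Set.Ioo (-(v * c)) (v * c),
              d0 - |cdfOf ν (x0 - v * c - y) - cdfOf ν x0|
                ≤ -(cdfOf μ (x0 - v * c - y) - cdfOf ν (x0 - v * c - y)) := by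
            intro y hy
            obtain ⟨hy1, hy2⟩ := hy
            have hmono := cdf_mono μ (show x0 - v * c - y ≤ x0 by linarith)
            have habs := neg_abs_le (cdfOf ν (x0 - v * c - y) - cdfOf ν x0)
            linarith
          have hmod : (∫ y in Set.Ioo (-(v * c)) (v * c),
              |cdfOf ν (x0 - v * c - y) - cdfOf ν x0|) ≤ J := by
            rw [hchange (x0 - v * c) x0]
            exact hmodJ x0 _ _ (by linarith) (by linarith) (by linarith)
          have hWle : ∀ s : ℝ, |(fun s : ℝ => -(cdfOf μ s - cdfOf ν s)) s| ≤ Δ := by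
            intro s
            rw [abs_neg]
            exact hDle s
          have hcore := core hv hc hγIoo hDm.neg hWle hGm hGabs hpt hmod
          refine hcore.trans ?_
          have hneg : (∫ y, -(cdfOf μ (x0 - v * c - y) - cdfOf ν (x0 - v * c - y)) * pker v y)
              = -(Hfun μ v (x0 - v * c) - Hfun ν v (x0 - v * c)) := by
            rw [hHdEq (x0 - v * c), ← integral_neg]
            congr 1
            funext y
            ring
          calc (∫ y, -(cdfOf μ (x0 - v * c - y) - cdfOf ν (x0 - v * c - y)) * pker v y)
              = -(Hfun μ v (x0 - v * c) - Hfun ν v (x0 - v * c)) := hneg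
            _ ≤ |Hfun μ v (x0 - v * c) - Hfun ν v (x0 - v * c)| := neg_le_abs _
            _ ≤ _ := hHbd _
      have h8 : γ * Δ ≤ γ * d0 + γ * ε := by
        have := mul_le_mul_of_nonneg_left (show Δ ≤ d0 + ε by linarith) hγ0.le
        linarith [this, mul_add γ d0 ε]
      have h9 : γ * ε ≤ ε := by nlinarith
      linarith
  -- final algebra
  have hκeq : κ * (2 * γ - 1) = 4 * B / (Real.pi * (A - B)) := by
    rw [hκdef]
    field_simp
  have hBle : Δ * B / (Real.pi * (A - B)) ≤ κ * (2 * γ - 1) * Δ := by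
    rw [hκeq, div_mul_eq_mul_div]
    exact (div_le_div_iff_of_pos_right (by positivity)).2 (by nlinarith)
  have hfinal : Real.pi * (1 - κ) * (2 * γ - 1) * Δ ≤ II + 1 / v * J := by
    have h1 : (2 * γ - 1) * Δ
        ≤ 1 / Real.pi * II + κ * (2 * γ - 1) * Δ + 1 / (Real.pi * v) * J := by linarith
    have h2 := mul_le_mul_of_nonneg_left h1 hπ.le
    have e1 : Real.pi * (1 / Real.pi * II + κ * (2 * γ - 1) * Δ + 1 / (Real.pi * v) * J)
        = II + Real.pi * (κ * (2 * γ - 1) * Δ) + 1 / v * J := by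
      have e1a : Real.pi * (1 / Real.pi) = 1 := mul_one_div_cancel hπ.ne'
      have e1b : Real.pi * (1 / (Real.pi * v)) = 1 / v := by
        rw [one_div, mul_inv, ← mul_assoc, mul_inv_cancel₀ hπ.ne', one_mul, one_div]
      calc Real.pi * (1 / Real.pi * II + κ * (2 * γ - 1) * Δ + 1 / (Real.pi * v) * J)
          = Real.pi * (1 / Real.pi) * II + Real.pi * (κ * (2 * γ - 1) * Δ)
            + Real.pi * (1 / (Real.pi * v)) * J := by ring
        _ = II + Real.pi * (κ * (2 * γ - 1) * Δ) + 1 / v * J := by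
            rw [e1a, e1b, one_mul]
    rw [e1] at h2
    have e2 : Real.pi * (1 - κ) * (2 * γ - 1) * Δ
        = Real.pi * ((2 * γ - 1) * Δ) - Real.pi * (κ * (2 * γ - 1) * Δ) := by ring
    rw [e2]
    linarith
  have hpos : 0 < Real.pi * (1 - κ) * (2 * γ - 1) :=
    mul_pos (mul_pos hπ (by linarith)) h2γ
  rw [show (1 : ℝ) / (Real.pi * (1 - κ) * (2 * γ - 1)) * (II + 1 / v * J)
      = (II + 1 / v * J) / (Real.pi * (1 - κ) * (2 * γ - 1)) from by ring,
    le_div_iff₀ hpos, mul_comm]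
  exact hfinal
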